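/- arXiv:1704.08891 — 3 statements merged into one kernel-verified Lean document; each statement's English description precedes it below -/
import Mathlib

section
/- Let β ∈ [0,1) and δ⋆ > 0 be such that δ⋆ k^{−β} ∈ (0,1) for all k ≥ 2. Then for any r ∈ ℝ, as n → ∞, Σ_{j=2}^{n} j^{−r} ∏_{k=j}^{n} (1 − δ⋆ k^{−β}) = O(n^{β − r}). -/
open Finset Real

lemma tele_aux (g : ℕ → ℝ) (a b : ℕ) (hab : a ≤ b) :
    ∑ j ∈ Finset.Icc a b, (g (j+1) - g j) = g (b+1) - g a := by
  rw [← Finset.Ico_add_one_right_eq_Icc, Finset.sum_Ico_eq_sum_range]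
  have h := Finset.sum_range_sub (fun i => g (a + i)) (b + 1 - a)
  simp only [Nat.add_sub_cancel' (by omega : a ≤ b + 1), Nat.add_zero] at h
  exact h

lemma base_bound (x n e : ℝ) (hx0 : 0 < x) (hn : 0 < n) (h1 : n/2 ≤ x) (h2 : x ≤ n) :
    x ^ e ≤ 2 ^ |e| * n ^ e := by
  rcases le_total 0 e with he | he
  · have h3 : x ^ e ≤ n ^ e := Real.rpow_le_rpow hx0.le h2 he
    have h4 : (1:ℝ) ≤ 2 ^ |e| := Real.one_le_rpow one_le_two (abs_nonneg e)
    nlinarith [Real.rpow_nonneg hn.le e]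
  · have h3 : x ^ e ≤ (n/2) ^ e :=
      Real.rpow_le_rpow_of_nonpos (by linarith) h1 he
    have h4 : (n/2) ^ e = 2 ^ |e| * n ^ e := by
      rw [Real.div_rpow hn.le (by norm_num : (0:ℝ) ≤ 2), abs_of_nonpos he,
        Real.rpow_neg (by norm_num : (0:ℝ) ≤ 2), div_eq_mul_inv]
      ring
    linarith

lemma pow_div_fact_le_exp (x : ℝ) (hx : 0 ≤ x) (K : ℕ) :
    x ^ K / K.factorial ≤ Real.exp x := by
  have h := Real.sum_le_exp_of_nonneg hx (K + 1)
  refine le_trans (Finset.single_le_sum (f := fun i => x ^ i / i.factorial)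
    (fun i _ => by positivity) (Finset.self_mem_range_succ K)) h

set_option maxHeartbeats 1000000 in
/-- Let `β ∈ [0,1)` and `δ⋆ > 0` with `δ⋆ k^{-β} ∈ (0,1)` for `k ≥ 2`. Then for any `r ∈ ℝ`,
`∑_{j=2}^{n} j^{-r} ∏_{k=j}^{n} (1 - δ⋆ k^{-β}) = O(n^{β - r})` as `n → ∞`. -/
theorem stmt10 (β δstar r : ℝ) (hβ : β ∈ Set.Ico (0 : ℝ) 1) (hδ : 0 < δstar)
    (hlt : ∀ k : ℕ, 2 ≤ k → δstar * (k : ℝ) ^ (-β) < 1) :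
    ∃ C : ℝ, ∃ N : ℕ, ∀ n : ℕ, N ≤ n →
      |∑ j ∈ Finset.Icc 2 n, (j : ℝ) ^ (-r) * ∏ k ∈ Finset.Icc j n, (1 - δstar * (k : ℝ) ^ (-β))|
        ≤ C * (n : ℝ) ^ (β - r) := by
  obtain ⟨hβ0, hβ1⟩ := hβ
  set K : ℕ := ⌈(1 + |r| + r - β) / (1 - β)⌉₊ with hKdef
  refine ⟨(2:ℝ) ^ |β - r| / δstar + (2/δstar) ^ K * K.factorial, 4, fun n hn4 => ?_⟩
  set m : ℕ := n / 2 with hmdef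
  have hm2 : 2 ≤ m := by omega
  have hmn : m + 1 ≤ n := by omega
  have hn0 : (0:ℝ) < n := by
    have : 0 < n := by omega
    exact_mod_cast this
  have hn1 : (1:ℝ) ≤ n := by exact_mod_cast (by omega : 1 ≤ n)
  set t : ℕ → ℝ := fun k => 1 - δstar * (k:ℝ) ^ (-β) with htdef
  have hkpos : ∀ k : ℕ, 1 ≤ k → 0 < δstar * (k:ℝ) ^ (-β) := by
    intro k hk
    have : (0:ℝ) < k := by exact_mod_cast hk
    positivity
  have ht0 : ∀ k : ℕ, 2 ≤ k → 0 < t k := by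
    intro k hk
    have := hlt k hk
    simp only [htdef]
    linarith
  have ht1 : ∀ k : ℕ, 1 ≤ k → t k ≤ 1 := by
    intro k hk
    have := hkpos k hk
    simp only [htdef]
    linarith
  set P : ℕ → ℝ := fun j => ∏ k ∈ Finset.Icc j n, t k with hPdef
  have hgoal : (∑ j ∈ Finset.Icc 2 n, (j:ℝ)^(-r) * ∏ k ∈ Finset.Icc j n,
      (1 - δstar * (k:ℝ)^(-β))) = ∑ j ∈ Finset.Icc 2 n, (j:ℝ)^(-r) * P j := rfl
  rw [hgoal]
  have hP0 : ∀ j : ℕ, 2 ≤ j → 0 ≤ P j := by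
    intro j hj
    exact Finset.prod_nonneg fun k hk => (ht0 k (le_trans hj (Finset.mem_Icc.1 hk).1)).le
  have hstep : ∀ j : ℕ, 2 ≤ j → j ≤ n → P j = t j * P (j+1) := by
    intro j h2 hjn
    show ∏ k ∈ Finset.Icc j n, t k = t j * ∏ k ∈ Finset.Icc (j+1) n, t k
    rw [Finset.Icc_add_one_left_eq_Ioc, Finset.Icc_eq_cons_Ioc hjn, Finset.prod_cons]
  have hPtop : P (n+1) = 1 := by
    show ∏ k ∈ Finset.Icc (n+1) n, t k = 1
    rw [Finset.Icc_eq_empty (by omega), Finset.prod_empty]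
  -- telescoping
  have htel : ∑ j ∈ Finset.Icc 2 n, (P (j+1) - P j) = P (n+1) - P 2 :=
    tele_aux P 2 n (by omega)
  have hTsum : ∑ j ∈ Finset.Icc 2 n, δstar * ((j:ℝ)^(-β) * P (j+1)) = 1 - P 2 := by
    have hc : ∀ j ∈ Finset.Icc 2 n, δstar * ((j:ℝ)^(-β) * P (j+1)) = P (j+1) - P j := by
      intro j hj
      obtain ⟨h2, hjn⟩ := Finset.mem_Icc.1 hj
      rw [hstep j h2 hjn]
      simp only [htdef]
      ring
    rw [Finset.sum_congr rfl hc, htel, hPtop]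
  have hT : ∑ j ∈ Finset.Icc 2 n, (j:ℝ)^(-β) * P (j+1) ≤ 1/δstar := by
    rw [← Finset.mul_sum] at hTsum
    have h2 := hP0 2 le_rfl
    rw [le_div_iff₀ hδ]
    nlinarith
  -- nonnegativity of summands
  have hterm0 : ∀ j ∈ Finset.Icc 2 n, 0 ≤ (j:ℝ)^(-r) * P j := by
    intro j hj
    obtain ⟨h2, _⟩ := Finset.mem_Icc.1 hj
    have : (0:ℝ) < j := by exact_mod_cast (by omega : 0 < j)
    exact mul_nonneg (Real.rpow_nonneg this.le _) (hP0 j h2)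
  rw [abs_of_nonneg (Finset.sum_nonneg hterm0)]
  -- split the sum
  have hsplit : ∑ j ∈ Finset.Icc 2 n, (j:ℝ)^(-r) * P j
      = ∑ j ∈ Finset.Icc 2 m, (j:ℝ)^(-r) * P j + ∑ j ∈ Finset.Ioc m n, (j:ℝ)^(-r) * P j := by
    have e1 : Finset.Icc 2 n = Finset.Ioc 1 n := Finset.Icc_add_one_left_eq_Ioc 1 n
    have e2 : Finset.Icc 2 m = Finset.Ioc 1 m := Finset.Icc_add_one_left_eq_Ioc 1 m
    rw [e1, e2, Finset.sum_Ioc_consecutive _ (by omega : 1 ≤ m) (by omega : m ≤ n)]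
  rw [hsplit]
  -- PART B
  have hB : ∑ j ∈ Finset.Ioc m n, (j:ℝ)^(-r) * P j
      ≤ ((2:ℝ)^|β-r| / δstar) * (n:ℝ)^(β-r) := by
    have step1 : ∀ j ∈ Finset.Ioc m n, (j:ℝ)^(-r) * P j
        ≤ ((2:ℝ)^|β-r| * (n:ℝ)^(β-r)) * ((j:ℝ)^(-β) * P (j+1)) := by
      intro j hj
      obtain ⟨hmj, hjn⟩ := Finset.mem_Ioc.1 hj
      have hj2 : 2 ≤ j := by omega
      have hj0 : (0:ℝ) < j := by exact_mod_cast (by omega : 0 < j)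
      have hjr : (j:ℝ)^(-r) = (j:ℝ)^(β-r) * (j:ℝ)^(-β) := by
        rw [← Real.rpow_add hj0]
        congr 1
        ring
      have hPj : P j ≤ P (j+1) := by
        rw [hstep j hj2 hjn]
        have h1 := ht1 j (by omega)
        have h0 := hP0 (j+1) (by omega)
        nlinarith
      have hbase : (j:ℝ)^(β-r) ≤ (2:ℝ)^|β-r| * (n:ℝ)^(β-r) := by
        apply base_bound _ _ _ hj0 hn0
        · have hnn : n ≤ 2 * j := by omega
          have : (n:ℝ) ≤ 2 * j := by exact_mod_cast hnn
          linarith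
        · exact_mod_cast hjn
      have hc0 : 0 ≤ (j:ℝ)^(-β) * P j :=
        mul_nonneg (Real.rpow_nonneg hj0.le _) (hP0 j hj2)
      have hc1 : (j:ℝ)^(-β) * P j ≤ (j:ℝ)^(-β) * P (j+1) :=
        mul_le_mul_of_nonneg_left hPj (Real.rpow_nonneg hj0.le _)
      calc (j:ℝ)^(-r) * P j = (j:ℝ)^(β-r) * ((j:ℝ)^(-β) * P j) := by rw [hjr]; ring
        _ ≤ ((2:ℝ)^|β-r| * (n:ℝ)^(β-r)) * ((j:ℝ)^(-β) * P (j+1)) := by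
            apply mul_le_mul hbase hc1 hc0
            positivity
    have hsub : ∑ j ∈ Finset.Ioc m n, (j:ℝ)^(-β) * P (j+1)
        ≤ ∑ j ∈ Finset.Icc 2 n, (j:ℝ)^(-β) * P (j+1) := by
      apply Finset.sum_le_sum_of_subset_of_nonneg
      · intro j hj
        obtain ⟨h1, h2⟩ := Finset.mem_Ioc.1 hj
        exact Finset.mem_Icc.2 ⟨by omega, h2⟩
      · intro j hj _
        obtain ⟨h2, _⟩ := Finset.mem_Icc.1 hj
        have hj0 : (0:ℝ) ≤ j := by positivity
        exact mul_nonneg (Real.rpow_nonneg hj0 _) (hP0 (j+1) (by omega))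
    calc ∑ j ∈ Finset.Ioc m n, (j:ℝ)^(-r) * P j
        ≤ ∑ j ∈ Finset.Ioc m n, ((2:ℝ)^|β-r| * (n:ℝ)^(β-r)) * ((j:ℝ)^(-β) * P (j+1)) :=
          Finset.sum_le_sum step1
      _ = ((2:ℝ)^|β-r| * (n:ℝ)^(β-r)) * ∑ j ∈ Finset.Ioc m n, (j:ℝ)^(-β) * P (j+1) := by
          rw [Finset.mul_sum]
      _ ≤ ((2:ℝ)^|β-r| * (n:ℝ)^(β-r)) * (1/δstar) := by
          apply mul_le_mul_of_nonneg_left (le_trans hsub hT)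
          positivity
      _ = ((2:ℝ)^|β-r| / δstar) * (n:ℝ)^(β-r) := by ring
  -- PART A
  set Q : ℝ := P (m+1) with hQdef
  have hQ0 : 0 ≤ Q := hP0 (m+1) (by omega)
  have hPQ : ∀ j : ℕ, 2 ≤ j → j ≤ m → P j ≤ Q := by
    intro j h2 hjm
    have hps : P j = (∏ k ∈ Finset.Ico j (m+1), t k) * Q := by
      show ∏ k ∈ Finset.Icc j n, t k = _
      rw [← Finset.Ico_add_one_right_eq_Icc,
        ← Finset.prod_Ico_consecutive t (by omega : j ≤ m+1) (by omega : m+1 ≤ n+1)]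
      congr 1
    have hle1 : ∏ k ∈ Finset.Ico j (m+1), t k ≤ 1 := by
      apply Finset.prod_le_one
      · intro k hk
        exact (ht0 k (le_trans h2 (Finset.mem_Ico.1 hk).1)).le
      · intro k hk
        exact ht1 k (by have := (Finset.mem_Ico.1 hk).1; omega)
    rw [hps]
    exact mul_le_of_le_one_left hQ0 hle1
  have hjrb : ∀ j : ℕ, 2 ≤ j → j ≤ m → (j:ℝ)^(-r) ≤ (n:ℝ)^|r| := by
    intro j h2 hjm
    have hj0 : (0:ℝ) < j := by exact_mod_cast (by omega : 0 < j)
    have hjn : (j:ℝ) ≤ n := by exact_mod_cast (by omega : j ≤ n)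
    rcases le_total r 0 with hr | hr
    · have : (j:ℝ)^(-r) ≤ (n:ℝ)^(-r) := Real.rpow_le_rpow hj0.le hjn (by linarith)
      rwa [abs_of_nonpos hr]
    · have h1 : (j:ℝ)^(-r) ≤ 1 :=
        Real.rpow_le_one_of_one_le_of_nonpos (by exact_mod_cast (by omega : 1 ≤ j)) (by linarith)
      have h2' : (1:ℝ) ≤ (n:ℝ)^|r| := Real.one_le_rpow hn1 (abs_nonneg r)
      linarith
  set x : ℝ := δstar/2 * (n:ℝ)^(1-β) with hxdef
  have hx0 : 0 ≤ x := by positivity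
  have hQexp : Q ≤ Real.exp (-x) := by
    have hQe : Q ≤ ∏ k ∈ Finset.Icc (m+1) n, Real.exp (-(δstar * (k:ℝ)^(-β))) := by
      apply Finset.prod_le_prod
      · intro k hk
        exact (ht0 k (by have := (Finset.mem_Icc.1 hk).1; omega)).le
      · intro k hk
        have := Real.add_one_le_exp (-(δstar * (k:ℝ)^(-β)))
        simp only [htdef]
        linarith
    rw [← Real.exp_sum] at hQe
    have hsneg : ∑ k ∈ Finset.Icc (m+1) n, -(δstar * (k:ℝ)^(-β))
        = -∑ k ∈ Finset.Icc (m+1) n, δstar * (k:ℝ)^(-β) := by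
      rw [Finset.sum_neg_distrib]
    have hslb : x ≤ ∑ k ∈ Finset.Icc (m+1) n, δstar * (k:ℝ)^(-β) := by
      have heach : ∀ k ∈ Finset.Icc (m+1) n, δstar * (n:ℝ)^(-β) ≤ δstar * (k:ℝ)^(-β) := by
        intro k hk
        obtain ⟨h1, h2⟩ := Finset.mem_Icc.1 hk
        have hk0 : (0:ℝ) < k := by exact_mod_cast (by omega : 0 < k)
        have hkn : (k:ℝ) ≤ n := by exact_mod_cast h2
        exact mul_le_mul_of_nonneg_left
          (Real.rpow_le_rpow_of_nonpos hk0 hkn (by linarith)) hδ.le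
      have hcard := Finset.card_nsmul_le_sum _ _ _ heach
      rw [Nat.card_Icc] at hcard
      have hcm : n + 1 - (m+1) = n - m := by omega
      rw [hcm, nsmul_eq_mul] at hcard
      have hnm : (n:ℝ)/2 ≤ ((n - m : ℕ):ℝ) := by
        have h2' : n ≤ 2 * (n - m) := by omega
        have : (n:ℝ) ≤ 2 * ((n - m : ℕ):ℝ) := by exact_mod_cast h2'
        linarith
      have hpow : (n:ℝ)^(1-β) = n * (n:ℝ)^(-β) := by
        rw [show (1:ℝ)-β = 1 + (-β) by ring, Real.rpow_add hn0, Real.rpow_one]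
      have hnb0 : 0 ≤ δstar * (n:ℝ)^(-β) := (hkpos n (by omega)).le
      calc x = (n:ℝ)/2 * (δstar * (n:ℝ)^(-β)) := by rw [hxdef, hpow]; ring
        _ ≤ ((n - m : ℕ):ℝ) * (δstar * (n:ℝ)^(-β)) :=
            mul_le_mul_of_nonneg_right hnm hnb0
        _ ≤ ∑ k ∈ Finset.Icc (m+1) n, δstar * (k:ℝ)^(-β) := hcard
    calc Q ≤ Real.exp (∑ k ∈ Finset.Icc (m+1) n, -(δstar * (k:ℝ)^(-β))) := hQe
      _ = Real.exp (-∑ k ∈ Finset.Icc (m+1) n, δstar * (k:ℝ)^(-β)) := by rw [hsneg]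
      _ ≤ Real.exp (-x) := Real.exp_le_exp.2 (by linarith)
  have hA : ∑ j ∈ Finset.Icc 2 m, (j:ℝ)^(-r) * P j
      ≤ (2/δstar) ^ K * (K.factorial : ℝ) * (n:ℝ)^(β-r) := by
    have hA1 : ∑ j ∈ Finset.Icc 2 m, (j:ℝ)^(-r) * P j
        ≤ ∑ _j ∈ Finset.Icc 2 m, (n:ℝ)^|r| * Q := by
      apply Finset.sum_le_sum
      intro j hj
      obtain ⟨h2, hjm⟩ := Finset.mem_Icc.1 hj
      have hj0 : (0:ℝ) < j := by exact_mod_cast (by omega : 0 < j)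
      apply mul_le_mul (hjrb j h2 hjm) (hPQ j h2 hjm) (hP0 j h2)
      positivity
    have hA2 : ∑ _j ∈ Finset.Icc 2 m, (n:ℝ)^|r| * Q ≤ (n:ℝ) * ((n:ℝ)^|r| * Q) := by
      rw [Finset.sum_const, nsmul_eq_mul]
      apply mul_le_mul_of_nonneg_right _ (by positivity)
      rw [Nat.card_Icc]
      exact_mod_cast (by omega : m + 1 - 2 ≤ n)
    -- now the polynomial-vs-exponential step
    have hKe : (1:ℝ) + |r| ≤ (β - r) + K * (1-β) := by
      have h1 : (1 + |r| + r - β)/(1-β) ≤ (K:ℝ) := Nat.le_ceil _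
      have h2 : (0:ℝ) < 1 - β := by linarith
      rw [div_le_iff₀ h2] at h1
      nlinarith
    have hexpK : x ^ K ≤ (K.factorial : ℝ) * Real.exp x := by
      have h := pow_div_fact_le_exp x hx0 K
      have hf : (0:ℝ) < (K.factorial : ℝ) := by exact_mod_cast K.factorial_pos
      rw [div_le_iff₀ hf] at h
      linarith [h]
    have hmono : (n:ℝ)^((1:ℝ)+|r|) ≤ (n:ℝ)^(β-r) * (n:ℝ)^((1-β) * K) := by
      rw [← Real.rpow_add hn0]
      exact Real.rpow_le_rpow_of_exponent_le hn1 (by push_cast; nlinarith [hKe])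
    have hnK : (n:ℝ)^((1-β) * K) = ((n:ℝ)^(1-β))^K := by
      rw [Real.rpow_mul hn0.le, Real.rpow_natCast]
    have hnbx : (n:ℝ)^(1-β) = (2/δstar) * x := by
      rw [hxdef]; field_simp
    have hchain : (n:ℝ) * ((n:ℝ)^|r| * Q) ≤ (2/δstar) ^ K * (K.factorial : ℝ) * (n:ℝ)^(β-r) := by
      have e1 : (n:ℝ) * ((n:ℝ)^|r| * Q) ≤ (n:ℝ)^((1:ℝ)+|r|) * Real.exp (-x) := by
        rw [Real.rpow_add hn0, Real.rpow_one]
        have : (n:ℝ) * (n:ℝ)^|r| * Q ≤ (n:ℝ) * (n:ℝ)^|r| * Real.exp (-x) := by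
          apply mul_le_mul_of_nonneg_left hQexp
          positivity
        linarith [this]
      have e2 : (n:ℝ)^((1:ℝ)+|r|) * Real.exp (-x)
          ≤ ((n:ℝ)^(β-r) * ((2/δstar) ^ K * x ^ K)) * Real.exp (-x) := by
        apply mul_le_mul_of_nonneg_right _ (Real.exp_nonneg _)
        calc (n:ℝ)^((1:ℝ)+|r|) ≤ (n:ℝ)^(β-r) * (n:ℝ)^((1-β) * K) := hmono
          _ = (n:ℝ)^(β-r) * ((2/δstar) ^ K * x ^ K) := by
              rw [hnK, hnbx, mul_pow]
      have e3 : ((n:ℝ)^(β-r) * ((2/δstar) ^ K * x ^ K)) * Real.exp (-x)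
          ≤ ((n:ℝ)^(β-r) * ((2/δstar) ^ K * ((K.factorial : ℝ) * Real.exp x))) * Real.exp (-x) := by
        apply mul_le_mul_of_nonneg_right _ (Real.exp_nonneg _)
        apply mul_le_mul_of_nonneg_left _ (Real.rpow_nonneg hn0.le _)
        apply mul_le_mul_of_nonneg_left hexpK
        positivity
      have e4 : ((n:ℝ)^(β-r) * ((2/δstar) ^ K * ((K.factorial : ℝ) * Real.exp x))) * Real.exp (-x)
          = (2/δstar) ^ K * (K.factorial : ℝ) * (n:ℝ)^(β-r) := by
        rw [Real.exp_neg]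
        field_simp [Real.exp_ne_zero]
      calc (n:ℝ) * ((n:ℝ)^|r| * Q) ≤ _ := e1
        _ ≤ _ := e2
        _ ≤ _ := e3
        _ = _ := e4
    exact le_trans (le_trans hA1 hA2) hchain
  linarith [hA, hB]
end

section
/- Assume (H1), (H1bis) and (H3). Let {γ_n, n ≥ 0} be (0,1/L]-valued, {S_n, n ≥ 1} any sequence in ℝ^q, and define θ_{n+1} := Prox_{γ_{n+1},g}(θ_n + γ_{n+1}(∇φ(θ_n) + Ψ(θ_n) S_{n+1})), assuming θ_n ∈ Θ for all n. Then there exist finite constants C, C', C'' (depending only on g, ∇φ, Ψ, S̄, Θ and L, not on {S_n}) such that for all n: (i) ‖θ_{n+1} − θ_n‖ ≤ C γ_{n+1} (1 + ‖S_{n+1} − S̄(θ_n)‖); (ii) ‖γ_{n+1} Ψ(θ_n) − γ_n Ψ(θ_{n−1})‖ ≤ C' (|γ_{n+1} − γ_n| + γ_n² (1 + ‖S_n − S̄(θ_{n−1})‖)); (iii) with T_γ(θ) := Prox_{γ,g}(θ + γ(∇φ(θ) + Ψ(θ) S̄(θ))), ‖γ_{n+1} T_{γ_{n+1}}(θ_n)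 − γ_n T_{γ_n}(θ_{n−1})‖ ≤ C'' (|γ_{n+1} − γ_n| + γ_n γ_{n+1} + γ_n² (1 + ‖S_n − S̄(θ_{n−1})‖)). -/
open MeasureTheory ProbabilityTheory Filter
open scoped ENNReal NNReal BigOperators RealInnerProductSpace Topology

noncomputable section

namespace SPGP

abbrev Euc (d : ℕ) := EuclideanSpace ℝ (Fin d)

/-- Convexity for `EReal`-valued functions on `ℝ^d`. -/
def ConvexEReal {d : ℕ} (g : Euc d → EReal) : Prop :=
  ∀ x y : Euc d, ∀ a b : ℝ, 0 ≤ a → 0 ≤ b → a + b = 1 →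
    g (a • x + b • y) ≤ (a : EReal) * g x + (b : EReal) * g y

/-- Assumption H1: `g` is `[0,+∞]`-valued, convex, lower semicontinuous and not identically `+∞`. -/
def H1 {d : ℕ} (g : Euc d → EReal) : Prop :=
  ConvexEReal g ∧ LowerSemicontinuous g ∧ (∀ θ, 0 ≤ g θ) ∧ (∃ θ, g θ ≠ ⊤)

/-- `prox γ θ` is the unique minimizer of `τ ↦ g τ + ‖θ - τ‖² / (2γ)`. -/
def IsProx {d : ℕ} (g : Euc d → EReal) (prox : ℝ → Euc d → Euc d) : Prop :=
  ∀ γ : ℝ, 0 < γ → ∀ θ : Euc d,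
    (∀ τ, g (prox γ θ) + ((‖θ - prox γ θ‖ ^ 2 / (2 * γ) : ℝ) : EReal)
        ≤ g τ + ((‖θ - τ‖ ^ 2 / (2 * γ) : ℝ) : EReal)) ∧
    (∀ τ, (∀ τ', g τ + ((‖θ - τ‖ ^ 2 / (2 * γ) : ℝ) : EReal)
        ≤ g τ' + ((‖θ - τ'‖ ^ 2 / (2 * γ) : ℝ) : EReal)) → τ = prox γ θ)

/-- The set `Θ = {θ : g θ + |ℓ θ| < ∞}`. -/
def domSet {d : ℕ} (g ℓ : Euc d → EReal) : Set (Euc d) :=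
  {θ | g θ ≠ ⊤ ∧ ℓ θ ≠ ⊥ ∧ ℓ θ ≠ ⊤}

/-- The set `𝓛 = argmax_{θ ∈ Θ} (ℓ θ - g θ)`. -/
def argmaxPen {d : ℕ} (g ℓ : Euc d → EReal) : Set (Euc d) :=
  {θ | θ ∈ domSet g ℓ ∧ ∀ θ' ∈ domSet g ℓ, ℓ θ' - g θ' ≤ ℓ θ - g θ}

/-- `S̄ θ = ∫ S dπ_θ`. -/
def sbar {Zs : Type*} [MeasurableSpace Zs] {d q : ℕ}
    (πm : Euc d → Measure Zs) (S : Zs → Euc q) (θ : Euc d) : Euc q :=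
  ∫ z, S z ∂(πm θ)

/-- Iterates `P^n` of a Markov kernel. -/
def kIter {Zs : Type*} [MeasurableSpace Zs] (K : Kernel Zs Zs) : ℕ → Kernel Zs Zs
  | 0 => Kernel.id
  | n + 1 => K ∘ₖ kIter K n

/-- `F_n`: the σ-algebra generated by all the draws of iterations `1, …, n`,
i.e. by `Z_{j,k}` for `k ≤ n - 1`, `j ≤ m (k+1)`. -/
def drawFilt {Ω Zs : Type*} [MeasurableSpace Zs] (Zd : ℕ → ℕ → Ω → Zs) (m : ℕ → ℕ)
    (n : ℕ) : MeasurableSpace Ω :=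
  ⨆ (k : ℕ) (_ : k < n) (j : ℕ) (_ : j ≤ m (k + 1)), MeasurableSpace.comap (Zd k j) inferInstance

/-- The σ-algebra generated by `F_n` and `Z_{0,n}, …, Z_{j,n}`. -/
def pathFilt {Ω Zs : Type*} [MeasurableSpace Zs] (Zd : ℕ → ℕ → Ω → Zs) (m : ℕ → ℕ)
    (n j : ℕ) : MeasurableSpace Ω :=
  drawFilt Zd m n ⊔ ⨆ (i : ℕ) (_ : i ≤ j), MeasurableSpace.comap (Zd n i) inferInstance

/-- Conditionally on the past, `Z_{1,n}, …, Z_{m_{n+1},n}` is a path of a Markov chain with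
kernel `P (θ_n)` started from `Z_{0,n}`. -/
def IsCondMarkovPath {Ω Zs : Type*} [MeasurableSpace Ω] [MeasurableSpace Zs] {d : ℕ}
    (μ : Measure Ω) (P : Euc d → Kernel Zs Zs) (θseq : ℕ → Ω → Euc d)
    (Zd : ℕ → ℕ → Ω → Zs) (m : ℕ → ℕ) : Prop :=
  ∀ n j, j < m (n + 1) → ∀ A : Set Zs, MeasurableSet A →
    (MeasureTheory.condExp (pathFilt Zd m n j) μ
        fun ω => A.indicator (fun _ => (1 : ℝ)) (Zd n (j + 1) ω))
      =ᵐ[μ] fun ω => ((P (θseq n ω)) (Zd n j ω) A).toReal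

/-- Structural properties of the draws: `Z_{0,0} = z⋆`, `Z_{0,n+1} = Z_{m_{n+1}, n}`,
and each draw is measurable. -/
def ChainStruct {Ω Zs : Type*} [MeasurableSpace Ω] [MeasurableSpace Zs]
    (Zd : ℕ → ℕ → Ω → Zs) (m : ℕ → ℕ) (zstar : Zs) : Prop :=
  (∀ ω, Zd 0 0 ω = zstar) ∧ (∀ n ω, Zd (n + 1) 0 ω = Zd n (m (n + 1)) ω) ∧
    (∀ n j, Measurable (Zd n j))

/-- Monte Carlo approximation `S^{mc}_{n+1} = m_{n+1}⁻¹ ∑_{j=1}^{m_{n+1}} S (Z_{j,n})`. -/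
def mcS {Ω Zs : Type*} {q : ℕ} (S : Zs → Euc q) (Zd : ℕ → ℕ → Ω → Zs) (m : ℕ → ℕ)
    (n : ℕ) (ω : Ω) : Euc q :=
  (m (n + 1) : ℝ)⁻¹ • ∑ j ∈ Finset.Icc 1 (m (n + 1)), S (Zd n j ω)

/-- Stochastic approximation `S^{sa}_{n+1} = (1 - δ_{n+1}) S^{sa}_n
+ δ_{n+1} m_{n+1}⁻¹ ∑_{j=1}^{m_{n+1}} S (Z_{j,n})`, with `S^{sa}_0 = s⋆`. -/
def saS {Ω Zs : Type*} {q : ℕ} (S : Zs → Euc q) (Zd : ℕ → ℕ → Ω → Zs) (m : ℕ → ℕ)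
    (δ : ℕ → ℝ) (s0 : Euc q) : ℕ → Ω → Euc q
  | 0 => fun _ => s0
  | n + 1 => fun ω =>
      (1 - δ (n + 1)) • saS S Zd m δ s0 n ω
        + (δ (n + 1) * (m (n + 1) : ℝ)⁻¹) • ∑ j ∈ Finset.Icc 1 (m (n + 1)), S (Zd n j ω)

/-- `D_n = ∑_{k ≥ n} ∏_{j=n}^{k} (1 - δ_j)`. -/
def Dseq (δ : ℕ → ℝ) (n : ℕ) : ℝ := ∑' i : ℕ, ∏ j ∈ Finset.Icc n (n + i), (1 - δ j)


lemma prox_finite {d : ℕ} (g : Euc d → EReal) (hnn : ∀ θ, 0 ≤ g θ)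
    (hproper : ∃ θ, g θ ≠ ⊤) (prox : ℝ → Euc d → Euc d) (hprox : IsProx g prox)
    {γ : ℝ} (hγ : 0 < γ) (z : Euc d) : g (prox γ z) ≠ ⊤ := by
  obtain ⟨τ₀, hτ₀⟩ := hproper
  have h := (hprox γ hγ z).1 τ₀
  intro htop
  rw [htop, EReal.top_add_coe] at h
  exact (EReal.add_lt_top hτ₀ (EReal.coe_ne_top _)).ne (top_le_iff.mp h)

lemma prox_key {d : ℕ} (g : Euc d → EReal) (hconv : ConvexEReal g)
    (hnn : ∀ θ, 0 ≤ g θ) (hproper : ∃ θ, g θ ≠ ⊤)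
    (prox : ℝ → Euc d → Euc d) (hprox : IsProx g prox)
    {γ : ℝ} (hγ : 0 < γ) (x y : Euc d) {t : ℝ} (ht0 : 0 < t) (ht1 : t ≤ 1) :
    (g (prox γ x)).toReal - (g (prox γ y)).toReal
      + ⟪x - prox γ x, prox γ y - prox γ x⟫ / γ
        ≤ t * ‖prox γ y - prox γ x‖ ^ 2 / (2 * γ) := by
  set p := prox γ x with hp
  set q := prox γ y with hq
  have hfp : g p ≠ ⊤ := prox_finite g hnn hproper prox hprox hγ x
  have hfq : g q ≠ ⊤ := prox_finite g hnn hproper prox hprox hγ y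
  have hbp : g p ≠ ⊥ := fun h => by simpa [h] using hnn p
  have hbq : g q ≠ ⊥ := fun h => by simpa [h] using hnn q
  set gp := (g p).toReal with hgp
  set gq := (g q).toReal with hgq
  have hgpe : g p = (gp : EReal) := (EReal.coe_toReal hfp hbp).symm
  have hgqe : g q = (gq : EReal) := (EReal.coe_toReal hfq hbq).symm
  set τ : Euc d := (1 - t) • p + t • q with hτ
  have hconvt : g τ ≤ (((1 - t) * gp + t * gq : ℝ) : EReal) := by
    have := hconv p q (1 - t) t (by linarith) ht0.le (by ring)
    rw [hgpe, hgqe] at this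
    simpa [EReal.coe_mul] using this
  have hmin := (hprox γ hγ x).1 τ
  rw [hgpe] at hmin
  have hchain : ((gp + ‖x - p‖ ^ 2 / (2 * γ) : ℝ) : EReal)
      ≤ (((1 - t) * gp + t * gq + ‖x - τ‖ ^ 2 / (2 * γ) : ℝ) : EReal) := by
    push_cast
    refine hmin.trans ?_
    exact add_le_add_left (by push_cast at hconvt ⊢; exact hconvt) _
  have hreal : gp + ‖x - p‖ ^ 2 / (2 * γ)
      ≤ (1 - t) * gp + t * gq + ‖x - τ‖ ^ 2 / (2 * γ) := by
    exact_mod_cast hchain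
  have hnorm : ‖x - τ‖ ^ 2
      = ‖x - p‖ ^ 2 - 2 * t * ⟪x - p, q - p⟫ + t ^ 2 * ‖q - p‖ ^ 2 := by
    have hxt : x - τ = (x - p) - t • (q - p) := by
      rw [hτ]; module
    rw [hxt, norm_sub_sq_real, real_inner_smul_right, norm_smul, Real.norm_eq_abs,
      mul_pow, sq_abs]
    ring
  rw [hnorm] at hreal
  have key : t * (gp - gq + ⟪x - p, q - p⟫ / γ) ≤ t * (t * ‖q - p‖ ^ 2 / (2 * γ)) := by
    have hγ' : γ ≠ 0 := hγ.ne'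
    set I := ⟪x - p, q - p⟫ with hI
    set N := ‖q - p‖ ^ 2 with hN
    set N1 := ‖x - p‖ ^ 2 with hN1
    have h2γ : (0:ℝ) < 2*γ := by linarith
    have h3 := mul_le_mul_of_nonneg_right hreal h2γ.le
    have e1 : (gp + N1/(2*γ))*(2*γ) = gp*(2*γ) + N1 := by field_simp
    have e2 : ((1-t)*gp + t*gq + (N1 - 2*t*I + t^2*N)/(2*γ))*(2*γ)
        = ((1-t)*gp+t*gq)*(2*γ) + (N1 - 2*t*I+t^2*N) := by field_simp
    rw [e1, e2] at h3
    rw [← mul_le_mul_iff_left₀ h2γ]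
    have e3 : t*(gp-gq+I/γ)*(2*γ) = (t*gp - t*gq)*(2*γ) + 2*t*I := by field_simp
    have e4 : t*(t*N/(2*γ))*(2*γ) = t^2*N := by field_simp
    rw [e3, e4]
    nlinarith [h3]
  have := (mul_le_mul_iff_right₀ ht0).mp key
  linarith [this]

lemma prox_nonexpansive {d : ℕ} (g : Euc d → EReal) (hconv : ConvexEReal g)
    (hnn : ∀ θ, 0 ≤ g θ) (hproper : ∃ θ, g θ ≠ ⊤)
    (prox : ℝ → Euc d → Euc d) (hprox : IsProx g prox)
    {γ : ℝ} (hγ : 0 < γ) (x y : Euc d) :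
    ‖prox γ x - prox γ y‖ ≤ ‖x - y‖ := by
  set p := prox γ x with hp
  set q := prox γ y with hq
  set N := ‖q - p‖ ^ 2 with hN
  have hNnn : 0 ≤ N := sq_nonneg _
  have hA : ⟪x - p, q - p⟫ + ⟪y - q, p - q⟫ ≤ 0 := by
    refine le_of_forall_pos_le_add fun ε hε => ?_
    set t : ℝ := min (1/2) (ε / (N + 1)) with ht
    have ht0 : 0 < t := lt_min (by norm_num) (div_pos hε (by linarith))
    have ht1 : t ≤ 1 := (min_le_left _ _).trans (by norm_num)
    have k1 := prox_key g hconv hnn hproper prox hprox hγ x y ht0 ht1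
    have k2 := prox_key g hconv hnn hproper prox hprox hγ y x ht0 ht1
    rw [← hp, ← hq] at k1 k2
    have hNrev : ‖p - q‖ ^ 2 = N := by rw [hN, norm_sub_rev]
    rw [hNrev] at k2
    rw [← hN] at k1
    have hsum : (⟪x - p, q - p⟫ + ⟪y - q, p - q⟫) / γ ≤ t * N / γ := by
      have := add_le_add k1 k2
      have e : t * N / (2 * γ) + t * N / (2 * γ) = t * N / γ := by
        field_simp; ring
      calc (⟪x - p, q - p⟫ + ⟪y - q, p - q⟫) / γ
          = ((g p).toReal - (g q).toReal + ⟪x - p, q - p⟫ / γ)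
            + ((g q).toReal - (g p).toReal + ⟪y - q, p - q⟫ / γ) := by ring
        _ ≤ t * N / (2 * γ) + t * N / (2 * γ) := this
        _ = t * N / γ := e
    have h2 : ⟪x - p, q - p⟫ + ⟪y - q, p - q⟫ ≤ t * N :=
      (div_le_div_iff_of_pos_right hγ).mp hsum
    have htN : t * N ≤ ε := by
      have h1 : t ≤ ε / (N + 1) := min_le_right _ _
      have : t * N ≤ (ε / (N + 1)) * N := mul_le_mul_of_nonneg_right h1 hNnn
      refine this.trans ?_
      rw [div_mul_eq_mul_div, div_le_iff₀ (by linarith : (0:ℝ) < N + 1)]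
      nlinarith
    linarith
  have hinner : ⟪x - p, q - p⟫ + ⟪y - q, p - q⟫ = ⟪x - y, q - p⟫ + N := by
    have e1 : ⟪y - q, p - q⟫ = -⟪y - q, q - p⟫ := by
      rw [show p - q = -(q - p) from by abel, inner_neg_right]
    have e2 : ⟪x - p, q - p⟫ - ⟪y - q, q - p⟫ = ⟪(x - p) - (y - q), q - p⟫ :=
      (inner_sub_left _ _ _).symm
    have e3 : (x - p) - (y - q) = (x - y) + (q - p) := by abel
    have e4 : ⟪(x - y) + (q - p), q - p⟫ = ⟪x - y, q - p⟫ + N := by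
      rw [inner_add_left, hN, real_inner_self_eq_norm_sq]
    rw [e1, ← sub_eq_add_neg, e2, e3, e4]
  have hCS : ⟪x - y, p - q⟫ ≤ ‖x - y‖ * ‖p - q‖ := real_inner_le_norm _ _
  have hneg : ⟪x - y, q - p⟫ = -⟪x - y, p - q⟫ := by
    rw [show q - p = -(p - q) from by abel, inner_neg_right]
  have hkey : ‖p - q‖ ^ 2 ≤ ‖x - y‖ * ‖p - q‖ := by
    have : ‖p - q‖ ^ 2 = N := by rw [hN, norm_sub_rev]
    rw [this]
    linarith [hA, hinner, hneg, hCS]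
  rcases eq_or_lt_of_le (norm_nonneg (p - q)) with h0 | h0
  · rw [← h0]; exact norm_nonneg _
  · have := (mul_le_mul_iff_left₀ h0).mp (by nlinarith [hkey] : ‖p - q‖ * ‖p - q‖ ≤ ‖x - y‖ * ‖p - q‖)
    exact this


set_option maxHeartbeats 2000000 in
/-- **Bounds on the proximal-gradient iterates** (Lemma 8). Under H1, H1bis and H3, for
`(0,1/L]`-valued step sizes and any driving sequence `{S_n}` with `Θ`-valued iterates, there
are constants `C, C', C''` not depending on `{S_n}` such that the increments of `θ_n`,
of `γ_{n+1} Ψ(θ_n)` and of `γ_{n+1} T_{γ_{n+1}}(θ_n)` satisfy the stated bounds, where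
`T_γ(θ) = Prox_{γ,g}(θ + γ(∇φ(θ) + Ψ(θ) S̄(θ)))`. -/
theorem stmt13 {Zs : Type*} [MeasurableSpace Zs] {d q : ℕ}
    (ν : Measure Zs) [SigmaFinite ν]
    (g ℓ : Euc d → EReal) (ℓr : Euc d → ℝ)
    (Gφ : Euc d → Euc d) (Ψ : Euc d → (Euc q →L[ℝ] Euc d)) (S : Zs → Euc q)
    (πdens : Euc d → Zs → ℝ≥0∞) (πm : Euc d → Measure Zs)
    (hπm : ∀ θ, πm θ = ν.withDensity (πdens θ))
    (hprob : ∀ θ, IsProbabilityMeasure (πm θ))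
    -- H1
    (hg_conv : ConvexEReal g) (hg_lsc : LowerSemicontinuous g)
    (hg_nonneg : ∀ θ, 0 ≤ g θ) (hg_proper : ∃ θ, g θ ≠ ⊤)
    -- H1bis
    (hl_ne_top : ∀ θ, ℓ θ ≠ ⊤)
    (hlr : ∀ θ ∈ domSet g ℓ, (ℓr θ : EReal) = ℓ θ)
    (hGφ_meas : Measurable Gφ) (hΨ_meas : ∀ v, Measurable fun θ => Ψ θ v)
    (hS_meas : Measurable S)
    (hgrad : ∀ θ ∈ domSet g ℓ, HasGradientAt ℓr (Gφ θ + Ψ θ (sbar πm S θ)) θ)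
    (L : ℝ) (hL : 0 < L)
    (hLipgrad : ∀ θ ∈ domSet g ℓ, ∀ θ' ∈ domSet g ℓ,
      ‖(Gφ θ + Ψ θ (sbar πm S θ)) - (Gφ θ' + Ψ θ' (sbar πm S θ'))‖ ≤ L * ‖θ - θ'‖)
    -- H3
    (hconc : ConcaveOn ℝ (domSet g ℓ) ℓr)
    (hArg : (argmaxPen g ℓ).Nonempty)
    (hΘbdd : Bornology.IsBounded (domSet g ℓ))
    (hLip3 : ∀ θ ∈ domSet g ℓ, ∀ θ' ∈ domSet g ℓ,
      ‖Gφ θ - Gφ θ'‖ + ‖Ψ θ - Ψ θ'‖ + ‖sbar πm S θ - sbar πm S θ'‖ ≤ L * ‖θ - θ'‖)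
    (prox : ℝ → Euc d → Euc d) (hprox : IsProx g prox)
    (hproxbd : ∃ Cp : ℝ, ∀ γ' ∈ Set.Ioc (0 : ℝ) (1 / L), ∀ θ ∈ domSet g ℓ,
      ‖prox γ' θ - θ‖ ≤ Cp * γ')
    -- step sizes
    (γ : ℕ → ℝ) (hγ : ∀ n, γ n ∈ Set.Ioc (0 : ℝ) (1 / L)) :
    ∃ C C' C'' : ℝ, ∀ (Sseq : ℕ → Euc q) (θseq : ℕ → Euc d),
      (∀ n : ℕ, θseq (n + 1)
        = prox (γ (n + 1)) (θseq n + γ (n + 1) • (Gφ (θseq n) + Ψ (θseq n) (Sseq (n + 1))))) →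
      (∀ n, θseq n ∈ domSet g ℓ) →
      ∀ n : ℕ,
        ‖θseq (n + 1) - θseq n‖
            ≤ C * γ (n + 1) * (1 + ‖Sseq (n + 1) - sbar πm S (θseq n)‖) ∧
          ‖γ (n + 2) • Ψ (θseq (n + 1)) - γ (n + 1) • Ψ (θseq n)‖
            ≤ C' * (|γ (n + 2) - γ (n + 1)|
                + γ (n + 1) ^ 2 * (1 + ‖Sseq (n + 1) - sbar πm S (θseq n)‖)) ∧
          ‖γ (n + 2) • prox (γ (n + 2))
                (θseq (n + 1)
                  + γ (n + 2) • (Gφ (θseq (n + 1)) + Ψ (θseq (n + 1)) (sbar πm S (θseq (n + 1)))))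
              - γ (n + 1) • prox (γ (n + 1))
                (θseq n + γ (n + 1) • (Gφ (θseq n) + Ψ (θseq n) (sbar πm S (θseq n))))‖
            ≤ C'' * (|γ (n + 2) - γ (n + 1)| + γ (n + 1) * γ (n + 2)
                + γ (n + 1) ^ 2 * (1 + ‖Sseq (n + 1) - sbar πm S (θseq n)‖)) := by
  obtain ⟨θs, hθsA⟩ := hArg
  have hθs : θs ∈ domSet g ℓ := hθsA.1
  obtain ⟨R0, hR0⟩ := isBounded_iff_forall_norm_le.mp hΘbdd
  set R := max R0 0 with hR
  have hRnn : (0:ℝ) ≤ R := le_max_right _ _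
  have hbound : ∀ θ ∈ domSet g ℓ, ‖θ‖ ≤ R := fun θ hθ => (hR0 θ hθ).trans (le_max_left _ _)
  obtain ⟨Cp0, hCp0⟩ := hproxbd
  set Cp := max Cp0 0 with hCpdef
  have hCpnn : (0:ℝ) ≤ Cp := le_max_right _ _
  have hproxb : ∀ γ' ∈ Set.Ioc (0:ℝ) (1/L), ∀ θ ∈ domSet g ℓ, ‖prox γ' θ - θ‖ ≤ Cp * γ' :=
    fun γ' hγ' θ hθ => (hCp0 γ' hγ' θ hθ).trans
      (mul_le_mul_of_nonneg_right (le_max_left _ _) hγ'.1.le)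
  have hdist : ∀ θ ∈ domSet g ℓ, ‖θ - θs‖ ≤ 2 * R := fun θ hθ =>
    (norm_sub_le _ _).trans (by linarith [hbound θ hθ, hbound θs hθs])
  set MG := ‖Gφ θs‖ + L * (2*R) with hMGdef
  set MP := ‖Ψ θs‖ + L * (2*R) with hMPdef
  set MS := ‖sbar πm S θs‖ + L * (2*R) with hMSdef
  have hMGnn : 0 ≤ MG := by positivity
  have hMPnn : 0 ≤ MP := by positivity
  have hMSnn : 0 ≤ MS := by positivity
  have hGb : ∀ θ ∈ domSet g ℓ, ‖Gφ θ‖ ≤ MG := by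
    intro θ hθ
    have h3 := hLip3 θ hθ θs hθs
    have h4 := norm_sub_norm_le (Gφ θ) (Gφ θs)
    have hL2 : L * ‖θ - θs‖ ≤ L * (2*R) := mul_le_mul_of_nonneg_left (hdist θ hθ) hL.le
    have h5 := norm_nonneg (Ψ θ - Ψ θs)
    have h6 := norm_nonneg (sbar πm S θ - sbar πm S θs)
    rw [hMGdef]; linarith
  have hPb : ∀ θ ∈ domSet g ℓ, ‖Ψ θ‖ ≤ MP := by
    intro θ hθ
    have h3 := hLip3 θ hθ θs hθs
    have h4 := norm_sub_norm_le (Ψ θ) (Ψ θs)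
    have hL2 : L * ‖θ - θs‖ ≤ L * (2*R) := mul_le_mul_of_nonneg_left (hdist θ hθ) hL.le
    have h5 := norm_nonneg (Gφ θ - Gφ θs)
    have h6 := norm_nonneg (sbar πm S θ - sbar πm S θs)
    rw [hMPdef]; linarith
  have hSb : ∀ θ ∈ domSet g ℓ, ‖sbar πm S θ‖ ≤ MS := by
    intro θ hθ
    have h3 := hLip3 θ hθ θs hθs
    have h4 := norm_sub_norm_le (sbar πm S θ) (sbar πm S θs)
    have hL2 : L * ‖θ - θs‖ ≤ L * (2*R) := mul_le_mul_of_nonneg_left (hdist θ hθ) hL.le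
    have h5 := norm_nonneg (Gφ θ - Gφ θs)
    have h6 := norm_nonneg (Ψ θ - Ψ θs)
    rw [hMSdef]; linarith
  set Mw := MG + MP * MS with hMwdef
  have hMwnn : 0 ≤ Mw := by positivity
  have hwb : ∀ θ ∈ domSet g ℓ, ‖Gφ θ + Ψ θ (sbar πm S θ)‖ ≤ Mw := by
    intro θ hθ
    refine (norm_add_le _ _).trans ?_
    have h1 := (Ψ θ).le_opNorm (sbar πm S θ)
    have h2 : ‖Ψ θ‖ * ‖sbar πm S θ‖ ≤ MP * MS :=
      mul_le_mul (hPb θ hθ) (hSb θ hθ) (norm_nonneg _) hMPnn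
    rw [hMwdef]; linarith [hGb θ hθ]
  set K := Mw + Cp with hKdef
  have hKnn : 0 ≤ K := by positivity
  set C := Cp + Mw + MP with hCdef
  have hCnn : 0 ≤ C := by positivity
  set MT := R + K * (1/L) with hMTdef
  have hMTnn : 0 ≤ MT := by positivity
  refine ⟨C, MP + L * C, MT + K + (C + K), ?_⟩
  intro Sseq θseq hrec hΘ n
  have hne : ∀ (γ' : ℝ), 0 < γ' → ∀ a b : Euc d, ‖prox γ' a - prox γ' b‖ ≤ ‖a - b‖ :=
    fun γ' h a b => prox_nonexpansive g hg_conv hg_nonneg hg_proper prox hprox h a b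
  obtain ⟨hγ1p, hγ1le⟩ := hγ (n+1)
  obtain ⟨hγ2p, hγ2le⟩ := hγ (n+2)
  have hstep0 : ∀ γ' ∈ Set.Ioc (0:ℝ) (1/L), ∀ θ ∈ domSet g ℓ, ∀ v : Euc d,
      ‖prox γ' (θ + γ' • v) - θ‖ ≤ γ' * ‖v‖ + Cp * γ' := by
    intro γ' hγ' θ hθ v
    have h1 : ‖prox γ' (θ + γ' • v) - θ‖
        ≤ ‖prox γ' (θ + γ' • v) - prox γ' θ‖ + ‖prox γ' θ - θ‖ := by
      have := norm_add_le (prox γ' (θ + γ' • v) - prox γ' θ) (prox γ' θ - θ)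
      simpa [sub_add_sub_cancel] using this
    have h2 : ‖prox γ' (θ + γ' • v) - prox γ' θ‖ ≤ ‖θ + γ' • v - θ‖ := hne γ' hγ'.1 _ _
    have h3 : ‖θ + γ' • v - θ‖ = γ' * ‖v‖ := by
      rw [add_sub_cancel_left, norm_smul, Real.norm_eq_abs, abs_of_pos hγ'.1]
    linarith [hproxb γ' hγ' θ hθ]
  set γ1 := γ (n+1) with hγ1def
  set γ2 := γ (n+2) with hγ2def
  set θ0 := θseq n with hθ0def
  set θ1 := θseq (n+1) with hθ1def
  set Sb0 := sbar πm S θ0 with hSb0def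
  set Sb1 := sbar πm S θ1 with hSb1def
  set ΔS := ‖Sseq (n+1) - Sb0‖ with hΔSdef
  have hΔSnn : 0 ≤ ΔS := norm_nonneg _
  have hv : ‖Gφ θ0 + Ψ θ0 (Sseq (n+1))‖ ≤ Mw + MP * ΔS := by
    have e : Gφ θ0 + Ψ θ0 (Sseq (n+1))
        = (Gφ θ0 + Ψ θ0 Sb0) + Ψ θ0 (Sseq (n+1) - Sb0) := by
      rw [map_sub]; abel
    rw [e]
    refine (norm_add_le _ _).trans ?_
    have h1 := (Ψ θ0).le_opNorm (Sseq (n+1) - Sb0)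
    have h2 : ‖Ψ θ0‖ * ΔS ≤ MP * ΔS := mul_le_mul_of_nonneg_right (hPb θ0 (hΘ n)) hΔSnn
    rw [← hΔSdef] at h1
    linarith [hwb θ0 (hΘ n)]
  have hstep : ‖θ1 - θ0‖ ≤ C * γ1 * (1 + ΔS) := by
    rw [hθ1def, hrec n]
    have h0 := hstep0 γ1 ⟨hγ1p, hγ1le⟩ θ0 (hΘ n) (Gφ θ0 + Ψ θ0 (Sseq (n+1)))
    rw [hCdef]
    have p := mul_le_mul_of_nonneg_left hv hγ1p.le
    have pa := mul_nonneg hMPnn hγ1p.le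
    have pb := mul_nonneg (add_nonneg hCpnn hMwnn) (mul_nonneg hγ1p.le hΔSnn)
    nlinarith [h0, p, pa, pb]
  refine ⟨hstep, ?_, ?_⟩
  · -- part (ii)
    have hΨLip : ‖Ψ θ1 - Ψ θ0‖ ≤ L * ‖θ1 - θ0‖ := by
      have h3 := hLip3 θ1 (hΘ (n+1)) θ0 (hΘ n)
      linarith [norm_nonneg (Gφ θ1 - Gφ θ0), norm_nonneg (Sb1 - Sb0)]
    have e : γ2 • Ψ θ1 - γ1 • Ψ θ0 = (γ2 - γ1) • Ψ θ1 + γ1 • (Ψ θ1 - Ψ θ0) := by module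
    rw [e]
    refine (norm_add_le _ _).trans ?_
    have s1 : ‖(γ2 - γ1) • Ψ θ1‖ ≤ |γ2 - γ1| * ‖Ψ θ1‖ := by
      simpa using ContinuousLinearMap.opNorm_smul_le (γ2 - γ1) (Ψ θ1)
    have s2 : ‖γ1 • (Ψ θ1 - Ψ θ0)‖ ≤ γ1 * ‖Ψ θ1 - Ψ θ0‖ := by
      have := ContinuousLinearMap.opNorm_smul_le γ1 (Ψ θ1 - Ψ θ0)
      simpa [abs_of_pos hγ1p] using this
    have h1 : |γ2 - γ1| * ‖Ψ θ1‖ ≤ |γ2 - γ1| * MP :=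
      mul_le_mul_of_nonneg_left (hPb θ1 (hΘ (n+1))) (abs_nonneg _)
    have h2 : γ1 * ‖Ψ θ1 - Ψ θ0‖ ≤ γ1 * (L * (C * γ1 * (1 + ΔS))) := by
      refine mul_le_mul_of_nonneg_left ?_ hγ1p.le
      exact hΨLip.trans (mul_le_mul_of_nonneg_left hstep hL.le)
    have q1 := mul_nonneg (mul_nonneg hL.le hCnn) (abs_nonneg (γ2 - γ1))
    have q2 : (0:ℝ) ≤ MP * (γ1^2 * (1 + ΔS)) :=
      mul_nonneg hMPnn (mul_nonneg (sq_nonneg γ1) (by linarith))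
    nlinarith [h1, h2, q1, q2, s1, s2]
  · -- part (iii)
    set T1 := prox γ1 (θ0 + γ1 • (Gφ θ0 + Ψ θ0 Sb0)) with hT1def
    set T2 := prox γ2 (θ1 + γ2 • (Gφ θ1 + Ψ θ1 Sb1)) with hT2def
    have hT1 : ‖T1 - θ0‖ ≤ γ1 * K := by
      have h0 := hstep0 γ1 ⟨hγ1p, hγ1le⟩ θ0 (hΘ n) (Gφ θ0 + Ψ θ0 Sb0)
      rw [← hT1def] at h0
      have h1 := hwb θ0 (hΘ n)
      rw [← hSb0def] at h1
      rw [hKdef]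
      have hw := mul_le_mul_of_nonneg_left h1 hγ1p.le
      linarith [h0, hw]
    have hT2 : ‖T2 - θ1‖ ≤ γ2 * K := by
      have h0 := hstep0 γ2 ⟨hγ2p, hγ2le⟩ θ1 (hΘ (n+1)) (Gφ θ1 + Ψ θ1 Sb1)
      rw [← hT2def] at h0
      have h1 := hwb θ1 (hΘ (n+1))
      rw [← hSb1def] at h1
      rw [hKdef]
      have hw := mul_le_mul_of_nonneg_left h1 hγ2p.le
      linarith [h0, hw]
    have hT2n : ‖T2‖ ≤ MT := by
      have h1 : ‖T2‖ ≤ ‖θ1‖ + ‖T2 - θ1‖ := by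
        have := norm_add_le θ1 (T2 - θ1)
        simpa [add_sub_cancel] using this
      have h2 : γ2 * K ≤ (1/L) * K := mul_le_mul_of_nonneg_right hγ2le hKnn
      have h3 := hbound θ1 (hΘ (n+1))
      rw [hMTdef]
      calc ‖T2‖ ≤ ‖θ1‖ + ‖T2 - θ1‖ := h1
        _ ≤ R + γ2 * K := add_le_add h3 hT2
        _ ≤ R + K * (1/L) := by linarith [h2]
    have hTT : ‖T2 - T1‖ ≤ γ2 * K + C * γ1 * (1 + ΔS) + γ1 * K := by
      have h1 : ‖T2 - T1‖ ≤ ‖T2 - θ1‖ + ‖θ1 - θ0‖ + ‖θ0 - T1‖ := by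
        have e : T2 - T1 = (T2 - θ1) + (θ1 - θ0) + (θ0 - T1) := by abel
        rw [e]
        exact (norm_add_le _ _).trans (add_le_add_left (norm_add_le _ _) _)
      have h2 : ‖θ0 - T1‖ = ‖T1 - θ0‖ := norm_sub_rev _ _
      linarith [hT1, hT2, hstep]
    have e : γ2 • T2 - γ1 • T1 = (γ2 - γ1) • T2 + γ1 • (T2 - T1) := by module
    rw [e]
    refine (norm_add_le _ _).trans ?_
    simp only [norm_smul, Real.norm_eq_abs]
    rw [abs_of_pos hγ1p]
    have h1 : |γ2 - γ1| * ‖T2‖ ≤ |γ2 - γ1| * MT :=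
      mul_le_mul_of_nonneg_left hT2n (abs_nonneg _)
    have h2 : γ1 * ‖T2 - T1‖ ≤ γ1 * (γ2 * K + C * γ1 * (1 + ΔS) + γ1 * K) :=
      mul_le_mul_of_nonneg_left hTT hγ1p.le
    have p1 := mul_nonneg (abs_nonneg (γ2 - γ1)) (add_nonneg hKnn (add_nonneg hCnn hKnn))
    have p2 := mul_nonneg (mul_nonneg hγ1p.le hγ2p.le)
      (add_nonneg hMTnn (add_nonneg hCnn hKnn))
    have p3 : (0:ℝ) ≤ γ1^2 * (1 + ΔS) * (MT + K) :=
      mul_nonneg (mul_nonneg (sq_nonneg γ1) (by linarith)) (add_nonneg hMTnn hKnn)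
    have p4 : (0:ℝ) ≤ K * γ1^2 * ΔS :=
      mul_nonneg (mul_nonneg hKnn (sq_nonneg γ1)) hΔSnn
    nlinarith [h1, h2, p1, p2, p3, p4]


end SPGP
end
end

section
/- Let β ∈ [0,1), r ∈ ℝ and D > 0. Then there exists a finite constant C (depending on β, r, D) such that for all n ≥ 2, Σ_{j=2}^{n} j^{−r} exp(D j^{1−β}) ≤ C exp(D n^{1−β}) n^{β − r}. -/
lemma aux_exp_le_three (t : ℝ) (h0 : 0 ≤ t) (h1 : t ≤ 1) : Real.exp t ≤ 1 + 3 * t := by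
  have h2 : (-t) + 1 ≤ Real.exp (-t) := Real.add_one_le_exp (-t)
  have h3 : Real.exp (-t) * Real.exp t = 1 := by rw [← Real.exp_add]; simp
  have h4 : Real.exp t ≤ Real.exp 1 := Real.exp_le_exp.mpr h1
  have h5 : Real.exp 1 < 2.7182818286 := Real.exp_one_lt_d9
  have h6 : 0 < Real.exp t := Real.exp_pos t
  nlinarith [mul_le_mul_of_nonneg_right h2 h6.le]

lemma aux_hu (q y x A : ℝ) (hq0 : 0 ≤ q) (hy0 : 0 < y) (hx0 : 0 < x)
    (hxy2 : x ≤ 2 * y) (h12 : 12 * q ≤ A) : 3 * (q / y) ≤ A / 2 * (1 / x) := by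
  rw [show 3 * (q / y) = 3 * q / y by ring, show A / 2 * (1 / x) = A / (2 * x) by ring,
    div_le_div_iff₀ hy0 (by linarith)]
  nlinarith [mul_nonneg hq0 (sub_nonneg.mpr hxy2), mul_nonneg (sub_nonneg.mpr h12) hy0.le]

lemma aux_key_real (p s D : ℝ) (hp0 : 0 < p) (hp1 : p ≤ 1) (hD : 0 < D) :
    ∃ N₀ : ℕ, 2 ≤ N₀ ∧ ∃ c₂ : ℝ, 0 < c₂ ∧ ∀ x : ℝ, ((N₀ : ℕ) : ℝ) ≤ x →
      c₂ * (x ^ (s + p - 1) * Real.exp (D * x ^ p)) ≤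
        Real.exp (D * x ^ p) * x ^ s - Real.exp (D * (x - 1) ^ p) * (x - 1) ^ s := by
  obtain ⟨q, hq_def⟩ : ∃ q : ℝ, q = |s| := ⟨_, rfl⟩
  have hq0 : 0 ≤ q := hq_def ▸ abs_nonneg s
  obtain ⟨c, hc_def⟩ : ∃ c : ℝ, c = D / (1 + D) := ⟨_, rfl⟩
  have hc0 : 0 < c := by rw [hc_def]; positivity
  have hcD : c * (1 + D) = D := by rw [hc_def]; field_simp
  have hc1 : c < 1 := by rw [hc_def, div_lt_one (by linarith)]; linarith
  obtain ⟨T, hT_def⟩ : ∃ T : ℝ, T = 12 * q / (c * p) + 1 := ⟨_, rfl⟩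
  have hT1 : 1 ≤ T := by
    have : 0 ≤ 12 * q / (c * p) := by positivity
    linarith
  have hT0 : 0 < T := by linarith
  have hTmul : c * p * T = 12 * q + c * p := by
    rw [hT_def]; field_simp
  refine ⟨2 + ⌈q⌉₊ + ⌈T ^ (1/p)⌉₊, by omega, c * p / 2, by positivity, ?_⟩
  intro x hxN
  have hceilq : q ≤ (⌈q⌉₊ : ℝ) := Nat.le_ceil q
  have hceilT : T ^ (1/p) ≤ (⌈T ^ (1/p)⌉₊ : ℝ) := Nat.le_ceil _
  have hceilq0 : (0:ℝ) ≤ (⌈q⌉₊ : ℝ) := Nat.cast_nonneg _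
  have hceilT0 : (0:ℝ) ≤ (⌈T ^ (1/p)⌉₊ : ℝ) := Nat.cast_nonneg _
  rw [show ((2 + ⌈q⌉₊ + ⌈T ^ (1/p)⌉₊ : ℕ) : ℝ) = 2 + (⌈q⌉₊ : ℝ) + (⌈T ^ (1/p)⌉₊ : ℝ) by
    push_cast; ring] at hxN
  have hxq : q + 2 ≤ x := by linarith
  have hx2 : 2 ≤ x := by linarith
  have hx0 : 0 < x := by linarith
  have hxT' : T ^ (1/p) ≤ x := by linarith
  have hxT : T ≤ x ^ p := by
    calc T = (T ^ (1/p)) ^ p := by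
          rw [← Real.rpow_mul hT0.le, one_div, inv_mul_cancel₀ hp0.ne', Real.rpow_one]
      _ ≤ x ^ p := Real.rpow_le_rpow (Real.rpow_nonneg hT0.le _) hxT' hp0.le
  obtain ⟨y, hy_def⟩ : ∃ y : ℝ, y = x - 1 := ⟨_, rfl⟩
  have hy1 : 1 ≤ y := by rw [hy_def]; linarith
  have hy0 : 0 < y := by linarith
  have hyq : q ≤ y := by rw [hy_def]; linarith
  have hxinv1 : 1/x ≤ 1 := by rw [div_le_one hx0]; linarith
  -- Bernoulli upper bound on x^p
  have hBern1 : x ^ p ≤ y ^ p * (1 + p * (1/y)) := by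
    have e1 : x = y * (1 + 1/y) := by
      rw [mul_add, mul_one, mul_one_div, div_self hy0.ne']; linarith
    have hb : (1 + 1/y) ^ p ≤ 1 + p * (1/y) :=
      rpow_one_add_le_one_add_mul_self (by
        have := one_div_nonneg.mpr hy0.le; linarith) hp0.le hp1
    calc x ^ p = y ^ p * (1 + 1/y) ^ p := by
          rw [e1, Real.mul_rpow hy0.le (by positivity)]
      _ ≤ y ^ p * (1 + p * (1/y)) :=
          mul_le_mul_of_nonneg_left hb (Real.rpow_nonneg hy0.le _)
  -- Bernoulli lower bound: y^p ≤ x^p (1 - p/x)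
  have hBern2 : y ^ p ≤ x ^ p * (1 + p * (-(1/x))) := by
    have e2 : y = x * (1 + -(1/x)) := by
      rw [mul_add, mul_one, mul_neg, mul_one_div, div_self hx0.ne']; linarith
    have hb : (1 + -(1/x)) ^ p ≤ 1 + p * (-(1/x)) :=
      rpow_one_add_le_one_add_mul_self (by linarith : (-1:ℝ) ≤ -(1/x)) hp0.le hp1
    calc y ^ p = x ^ p * (1 + -(1/x)) ^ p := by
          rw [e2, Real.mul_rpow hx0.le (by linarith)]
      _ ≤ x ^ p * (1 + p * (-(1/x))) :=
          mul_le_mul_of_nonneg_left hb (Real.rpow_nonneg hx0.le _)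
  obtain ⟨δ, hδ_def⟩ : ∃ δ : ℝ, δ = x ^ p - y ^ p := ⟨_, rfl⟩
  have hxp0 : 0 < x ^ p := Real.rpow_pos_of_pos hx0 p
  have hyp0 : 0 < y ^ p := Real.rpow_pos_of_pos hy0 p
  have hδ_lb : p * (x ^ p / x) ≤ δ := by
    have h : x ^ p * (1 + p * (-(1/x))) = x ^ p - p * (x ^ p / x) := by ring
    rw [h] at hBern2
    rw [hδ_def]; linarith
  have hδ_ub : δ ≤ 1 := by
    have hyy : y ^ p ≤ y := by
      calc y ^ p ≤ y ^ (1:ℝ) := Real.rpow_le_rpow_of_exponent_le hy1 hp1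
        _ = y := Real.rpow_one y
    have h : y ^ p * (1 + p * (1/y)) = y ^ p + y ^ p * (p / y) := by ring
    rw [h] at hBern1
    have h2 : y ^ p * (p / y) ≤ y * (p / y) :=
      mul_le_mul_of_nonneg_right hyy (by positivity)
    have h3 : y * (p / y) = p := by field_simp
    rw [hδ_def]; linarith
  have hδ0 : 0 < δ := lt_of_lt_of_le (by positivity) hδ_lb
  -- exp(-(Dδ)) ≤ 1 - cδ
  have hcδc : c * δ ≤ c := mul_le_of_le_one_right hc0.le hδ_ub
  have h1cδ : 0 < 1 - c * δ := by linarith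
  have hexp : Real.exp (-(D * δ)) ≤ 1 - c * δ := by
    have hE := Real.add_one_le_exp (D * δ)
    have key1 : 1 ≤ (1 - c * δ) * Real.exp (D * δ) := by
      have h7 : 1 ≤ (1 - c * δ) * (D * δ + 1) := by
        nlinarith [mul_nonneg (mul_nonneg hc0.le hD.le)
          (mul_nonneg hδ0.le (sub_nonneg.mpr hδ_ub))]
      calc (1:ℝ) ≤ (1 - c * δ) * (D * δ + 1) := h7
        _ ≤ (1 - c * δ) * Real.exp (D * δ) := mul_le_mul_of_nonneg_left hE h1cδ.le
    rw [Real.exp_neg, inv_eq_one_div, div_le_iff₀ (Real.exp_pos _)]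
    linarith
  -- y^s ≤ x^s (1 + 3 q / y)
  have hxs0 : 0 < x ^ s := Real.rpow_pos_of_pos hx0 s
  have hys0 : 0 < y ^ s := Real.rpow_pos_of_pos hy0 s
  have hU : y ^ s ≤ x ^ s * (1 + 3 * (q / y)) := by
    rcases le_or_gt 0 s with hs0 | hs0
    · have h1 : y ^ s ≤ x ^ s := Real.rpow_le_rpow hy0.le (by linarith) hs0
      have h2 : (1:ℝ) ≤ 1 + 3 * (q / y) := by
        have : 0 ≤ q / y := by positivity
        linarith
      calc y ^ s ≤ x ^ s := h1
        _ ≤ x ^ s * (1 + 3 * (q / y)) := le_mul_of_one_le_right hxs0.le h2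
    · have hqs : q = -s := by rw [hq_def]; exact abs_of_neg hs0
      have h2 : x / y ≤ Real.exp (1/y) := by
        have h1 : x / y = 1 + 1/y := by
          rw [eq_comm, eq_div_iff hy0.ne', add_mul, one_mul, one_div_mul_cancel hy0.ne']
          linarith
        rw [h1]; linarith [Real.add_one_le_exp (1/y)]
      have h3 : (x/y) ^ q ≤ Real.exp (1/y) ^ q :=
        Real.rpow_le_rpow (by positivity) h2 hq0
      have h4 : Real.exp (1/y) ^ q = Real.exp (1/y * q) := (Real.exp_mul _ _).symm
      have h5 : Real.exp (1/y * q) ≤ 1 + 3 * (q / y) := by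
        rw [show 1/y * q = q/y by ring]
        exact aux_exp_le_three _ (by positivity) (by rw [div_le_one hy0]; exact hyq)
      have h6 : x ^ s * (x/y) ^ q = y ^ s := by
        rw [hqs, Real.rpow_neg (by positivity), Real.div_rpow hx0.le hy0.le, inv_div,
          mul_comm, div_mul_cancel₀ _ hxs0.ne']
      calc y ^ s = x ^ s * (x/y) ^ q := h6.symm
        _ ≤ x ^ s * (1 + 3 * (q / y)) :=
          mul_le_mul_of_nonneg_left (h3.trans (h4.le.trans h5)) hxs0.le
  -- bound on u = 3 q / y
  have h12 : 12 * q ≤ c * p * x ^ p := by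
    have h1 : c * p * T ≤ c * p * x ^ p :=
      mul_le_mul_of_nonneg_left hxT (by positivity)
    linarith [mul_pos hc0 hp0]
  have hu_ub : 3 * (q / y) ≤ c * p / 2 * (x ^ p / x) := by
    have h1 := aux_hu q y x (c * p * x ^ p) hq0 hy0 hx0 (by rw [hy_def]; linarith) h12
    have heq : c * p * x ^ p / 2 * (1 / x) = c * p / 2 * (x ^ p / x) := by ring
    linarith [h1, heq.le, heq.ge]
  -- assemble
  have hGy : Real.exp (D * y ^ p) = Real.exp (D * x ^ p) * Real.exp (-(D * δ)) := by
    rw [← Real.exp_add]; congr 1; rw [hδ_def]; ring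
  have hstep : c * p / 2 * (x ^ p / x) * x ^ s ≤ x ^ s - (1 - c * δ) * (x ^ s * (1 + 3 * (q / y))) := by
    have hcv : c * (p * (x ^ p / x)) ≤ c * δ := mul_le_mul_of_nonneg_left hδ_lb hc0.le
    have huv : 0 ≤ c * δ * (3 * (q / y)) := by positivity
    have hfact : x ^ s - (1 - c * δ) * (x ^ s * (1 + 3 * (q / y)))
        = x ^ s * (c * δ - 3 * (q / y) + c * δ * (3 * (q / y))) := by ring
    rw [hfact]
    have hinner : c * p / 2 * (x ^ p / x) ≤ c * δ - 3 * (q / y) + c * δ * (3 * (q / y)) := by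
      linarith
    calc c * p / 2 * (x ^ p / x) * x ^ s = x ^ s * (c * p / 2 * (x ^ p / x)) := by ring
      _ ≤ x ^ s * (c * δ - 3 * (q / y) + c * δ * (3 * (q / y))) :=
          mul_le_mul_of_nonneg_left hinner hxs0.le
  have hprod : Real.exp (-(D * δ)) * y ^ s ≤ (1 - c * δ) * (x ^ s * (1 + 3 * (q / y))) :=
    mul_le_mul hexp hU hys0.le h1cδ.le
  have hxrs : x ^ (s + p - 1) = x ^ s * (x ^ p / x) := by
    rw [show s + p - 1 = s + (p + (-1)) by ring, Real.rpow_add hx0, Real.rpow_add hx0,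
      Real.rpow_neg_one, div_eq_mul_inv]
  have hfinal : Real.exp (D * x ^ p) * x ^ s - Real.exp (D * y ^ p) * y ^ s
      = Real.exp (D * x ^ p) * (x ^ s - Real.exp (-(D * δ)) * y ^ s) := by
    rw [hGy]; ring
  rw [show x - 1 = y from hy_def.symm, hfinal, hxrs]
  have hE0 : 0 ≤ Real.exp (D * x ^ p) := (Real.exp_pos _).le
  calc c * p / 2 * (x ^ s * (x ^ p / x) * Real.exp (D * x ^ p))
      = Real.exp (D * x ^ p) * (c * p / 2 * (x ^ p / x) * x ^ s) := by ring
    _ ≤ Real.exp (D * x ^ p) * (x ^ s - Real.exp (-(D * δ)) * y ^ s) := by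
        apply mul_le_mul_of_nonneg_left _ hE0
        calc c * p / 2 * (x ^ p / x) * x ^ s
            ≤ x ^ s - (1 - c * δ) * (x ^ s * (1 + 3 * (q / y))) := hstep
          _ ≤ x ^ s - Real.exp (-(D * δ)) * y ^ s := by linarith [hprod]


lemma aux_exp_ge_pow (t : ℝ) (k : ℕ) (h0 : 0 ≤ t) (hk : 1 ≤ k) :
    (t / k) ^ k ≤ Real.exp t := by
  have hk0 : (k : ℝ) ≠ 0 := Nat.cast_ne_zero.mpr (by omega)
  have h1 : t / k ≤ Real.exp (t / k) := by
    nlinarith [Real.add_one_le_exp (t / k)]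
  calc (t / k) ^ k ≤ (Real.exp (t / k)) ^ k := pow_le_pow_left₀ (by positivity) h1 k
    _ = Real.exp ((k : ℝ) * (t / k)) := (Real.exp_nat_mul _ k).symm
    _ = Real.exp t := by rw [mul_div_cancel₀ _ hk0]

lemma aux_lb (p s D : ℝ) (hp0 : 0 < p) (hD : 0 < D) :
    ∃ m : ℝ, 0 < m ∧ ∀ x : ℝ, 1 ≤ x → m ≤ Real.exp (D * x ^ p) * x ^ s := by
  rcases le_or_gt 0 s with hs0 | hs0
  · refine ⟨1, one_pos, fun x hx => ?_⟩
    have hx0 : 0 < x := by linarith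
    have h1 : 1 ≤ Real.exp (D * x ^ p) :=
      Real.one_le_exp (by positivity)
    have h2 : 1 ≤ x ^ s := Real.one_le_rpow hx hs0
    nlinarith
  · obtain ⟨k, hk_def⟩ : ∃ k : ℕ, k = ⌈(-s) / p⌉₊ + 1 := ⟨_, rfl⟩
    have hk1 : 1 ≤ k := by omega
    have hk0 : (0:ℝ) < (k:ℝ) := by exact_mod_cast hk1
    have hkps : -s ≤ p * k := by
      have h1 : (-s) / p ≤ (⌈(-s) / p⌉₊ : ℝ) := Nat.le_ceil _
      have h2 : (⌈(-s) / p⌉₊ : ℝ) ≤ (k : ℝ) := by rw [hk_def]; push_cast; linarith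
      have h3 : (-s) / p ≤ (k:ℝ) := h1.trans h2
      rw [div_le_iff₀ hp0] at h3
      linarith [h3]
    refine ⟨(D / k) ^ k, by positivity, fun x hx => ?_⟩
    have hx0 : 0 < x := by linarith
    have hxp0 : 0 < x ^ p := Real.rpow_pos_of_pos hx0 p
    have hxs0 : 0 < x ^ s := Real.rpow_pos_of_pos hx0 s
    have h1 : ((D * x ^ p) / k) ^ k ≤ Real.exp (D * x ^ p) :=
      aux_exp_ge_pow _ k (by positivity) hk1
    have h2 : ((D * x ^ p) / k) ^ k = (D / k) ^ k * (x ^ p) ^ k := by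
      rw [← mul_pow, div_mul_eq_mul_div]
    have h3 : (x ^ p) ^ k = x ^ (p * k) := by
      rw [← Real.rpow_natCast (x ^ p) k, ← Real.rpow_mul hx0.le]
    have h4 : x ^ (p * k) * x ^ s = x ^ (p * k + s) := (Real.rpow_add hx0 _ _).symm
    have h5 : (1:ℝ) ≤ x ^ (p * k + s) := Real.one_le_rpow hx (by linarith)
    calc (D / k) ^ k ≤ (D / k) ^ k * x ^ (p * k + s) :=
          le_mul_of_one_le_right (by positivity) h5
      _ = (D / k) ^ k * x ^ (p * k) * x ^ s := by rw [← h4]; ring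
      _ = ((D * x ^ p) / k) ^ k * x ^ s := by rw [h2, h3]
      _ ≤ Real.exp (D * x ^ p) * x ^ s := mul_le_mul_of_nonneg_right h1 hxs0.le

/-- Let `β ∈ [0,1)`, `r ∈ ℝ` and `D > 0`. Then there exists a finite constant `C` such that for
all `n ≥ 2`, `∑_{j=2}^{n} j^{-r} exp(D j^{1-β}) ≤ C exp(D n^{1-β}) n^{β - r}`. -/
theorem stmt17 (β r D : ℝ) (hβ : β ∈ Set.Ico (0 : ℝ) 1) (hD : 0 < D) :
    ∃ C : ℝ, ∀ n : ℕ, 2 ≤ n →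
      ∑ j ∈ Finset.Icc 2 n, (j : ℝ) ^ (-r) * Real.exp (D * (j : ℝ) ^ (1 - β))
        ≤ C * Real.exp (D * (n : ℝ) ^ (1 - β)) * (n : ℝ) ^ (β - r) := by
  obtain ⟨hβ0, hβ1⟩ := hβ
  have hp0 : 0 < 1 - β := by linarith
  obtain ⟨N₀, hN₀2, c₂, hc₂, hkey⟩ := aux_key_real (1 - β) (β - r) D hp0 (by linarith) hD
  obtain ⟨m, hm0, hm⟩ := aux_lb (1 - β) (β - r) D hp0 hD
  obtain ⟨A, hA_def⟩ :
      ∃ A : ℝ, A = ∑ j ∈ Finset.Icc 2 N₀, (j : ℝ) ^ (-r) * Real.exp (D * (j : ℝ) ^ (1 - β)) :=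
    ⟨_, rfl⟩
  have hterm_nonneg : ∀ j : ℕ, 0 ≤ (j : ℝ) ^ (-r) * Real.exp (D * (j : ℝ) ^ (1 - β)) := by
    intro j
    positivity
  have hA0 : 0 ≤ A := by
    rw [hA_def]
    exact Finset.sum_nonneg fun j _ => hterm_nonneg j
  refine ⟨A / m + 1 / c₂, ?_⟩
  have hAm0 : 0 ≤ A / m := by positivity
  have hc₂' : 0 ≤ 1 / c₂ := by positivity
  have hsmall : ∀ n : ℕ, 2 ≤ n → n ≤ N₀ →
      ∑ j ∈ Finset.Icc 2 n, (j : ℝ) ^ (-r) * Real.exp (D * (j : ℝ) ^ (1 - β))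
        ≤ (A / m + 1 / c₂) * Real.exp (D * (n : ℝ) ^ (1 - β)) * (n : ℝ) ^ (β - r) := by
    intro n hn2 hnN
    have h1 : ∑ j ∈ Finset.Icc 2 n, (j : ℝ) ^ (-r) * Real.exp (D * (j : ℝ) ^ (1 - β)) ≤ A := by
      rw [hA_def]
      exact Finset.sum_le_sum_of_subset_of_nonneg
        (Finset.Icc_subset_Icc_right hnN) (fun j _ _ => hterm_nonneg j)
    have hn1 : (1:ℝ) ≤ (n:ℝ) := by exact_mod_cast Nat.one_le_of_lt hn2
    have h2 := hm (n:ℝ) hn1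
    have hG0 : 0 ≤ Real.exp (D * (n : ℝ) ^ (1 - β)) * (n : ℝ) ^ (β - r) := by positivity
    have h3 : A ≤ A / m * (Real.exp (D * (n : ℝ) ^ (1 - β)) * (n : ℝ) ^ (β - r)) := by
      have h4 := mul_le_mul_of_nonneg_left h2 hAm0
      rw [div_mul_cancel₀ A hm0.ne'] at h4
      exact h4
    have h5 : A / m * (Real.exp (D * (n : ℝ) ^ (1 - β)) * (n : ℝ) ^ (β - r))
        ≤ (A / m + 1 / c₂) * (Real.exp (D * (n : ℝ) ^ (1 - β)) * (n : ℝ) ^ (β - r)) :=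
      mul_le_mul_of_nonneg_right (by linarith) hG0
    rw [mul_assoc]
    linarith
  intro n hn
  induction n, hn using Nat.le_induction with
  | base => exact hsmall 2 le_rfl hN₀2
  | succ n hn ih =>
    rcases le_or_gt (n + 1) N₀ with hle | hgt
    · exact hsmall (n + 1) (by omega) hle
    · have hkey1 := hkey ((n + 1 : ℕ) : ℝ) (by exact_mod_cast hgt.le)
      rw [show (β - r) + (1 - β) - 1 = -r by ring] at hkey1
      have hx1 : ((n + 1 : ℕ) : ℝ) - 1 = (n : ℝ) := by push_cast; ring
      rw [hx1] at hkey1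
      rw [Finset.sum_Icc_succ_top (by omega : 2 ≤ n + 1)]
      have ih' : ∑ j ∈ Finset.Icc 2 n, (j : ℝ) ^ (-r) * Real.exp (D * (j : ℝ) ^ (1 - β))
          ≤ (A / m + 1 / c₂) * (Real.exp (D * (n : ℝ) ^ (1 - β)) * (n : ℝ) ^ (β - r)) := by
        rw [← mul_assoc]; exact ih
      have ht0 := hterm_nonneg (n + 1)
      have hd0 : 0 ≤ Real.exp (D * ((n + 1 : ℕ) : ℝ) ^ (1 - β)) * ((n + 1 : ℕ) : ℝ) ^ (β - r)
          - Real.exp (D * (n : ℝ) ^ (1 - β)) * (n : ℝ) ^ (β - r) :=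
        le_trans (by positivity) hkey1
      have ht : ((n + 1 : ℕ) : ℝ) ^ (-r) * Real.exp (D * ((n + 1 : ℕ) : ℝ) ^ (1 - β))
          ≤ (1 / c₂) * (Real.exp (D * ((n + 1 : ℕ) : ℝ) ^ (1 - β)) * ((n + 1 : ℕ) : ℝ) ^ (β - r)
            - Real.exp (D * (n : ℝ) ^ (1 - β)) * (n : ℝ) ^ (β - r)) := by
        rw [div_mul_eq_mul_div, one_mul, le_div_iff₀ hc₂]
        linarith [hkey1]
      have hC1 : (1 / c₂) * (Real.exp (D * ((n + 1 : ℕ) : ℝ) ^ (1 - β)) * ((n + 1 : ℕ) : ℝ) ^ (β - r)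
            - Real.exp (D * (n : ℝ) ^ (1 - β)) * (n : ℝ) ^ (β - r))
          ≤ (A / m + 1 / c₂) * (Real.exp (D * ((n + 1 : ℕ) : ℝ) ^ (1 - β)) * ((n + 1 : ℕ) : ℝ) ^ (β - r)
            - Real.exp (D * (n : ℝ) ^ (1 - β)) * (n : ℝ) ^ (β - r)) :=
        mul_le_mul_of_nonneg_right (by linarith) hd0
      rw [mul_assoc]
      nlinarith [ih', ht, hC1]
end
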